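/- Let n ≥ 2 and d ≥ 1 be integers and let a, b be complex numbers. If the polynomial identity binom(a + d·t + n, n) + binom(b + d·t + n, n) = 2 · d^n · binom(t + n, n) holds in ℂ[t], then a + b = (n+1)(d−1) and a·b = (n+1)(d−1)·((3n+4)d − (3n+2))/12. -/

import Mathlib

open Polynomial Finset

/-- The generalized binomial coefficient `binom(p, n) = p(p−1)⋯(p−n+1)/n!`
for a polynomial `p` over `ℂ`. -/
noncomputable def polyBinom (p : Polynomial ℂ) (n : ℕ) : Polynomial ℂ :=
  Polynomial.C ((Nat.factorial n : ℂ)⁻¹) * ∏ k ∈ Finset.range n, (p - Polynomial.C (k : ℂ))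

/-- If `binom(a + d·t + n, n) + binom(b + d·t + n, n) = 2 d^n binom(t + n, n)` holds in `ℂ[t]`
with `n ≥ 2`, `d ≥ 1`, then `a + b = (n+1)(d−1)` and
`a·b = (n+1)(d−1)((3n+4)d − (3n+2))/12`. -/

lemma natdeg_prod (n : ℕ) (r : ℕ → ℂ) :
    (∏ k ∈ range n, (X + C (r k))).natDegree = n := by
  rw [Polynomial.natDegree_prod]
  · simp [Polynomial.natDegree_X_add_C]
  · intro i _; exact Polynomial.X_add_C_ne_zero (r i)

lemma coeff_top (r : ℕ → ℂ) (n : ℕ) :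
    (∏ k ∈ range n, (X + C (r k))).coeff n = 1 := by
  have h := natdeg_prod n r
  have hm : (∏ k ∈ range n, (X + C (r k))).Monic :=
    monic_prod_of_monic _ _ fun k _ => monic_X_add_C (r k)
  have := hm.coeff_natDegree
  rwa [h] at this

lemma coeff_sub1 (r : ℕ → ℂ) (n : ℕ) :
    (∏ k ∈ range (n+1), (X + C (r k))).coeff n = ∑ k ∈ range (n+1), r k := by
  induction n with
  | zero => simp
  | succ n ih =>
    rw [prod_range_succ, mul_add, coeff_add, coeff_mul_X, coeff_mul_C, ih,
      coeff_top, sum_range_succ r (n+1)]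
    ring

lemma coeff_sub2 (r : ℕ → ℂ) (n : ℕ) :
    (∏ k ∈ range (n+2), (X + C (r k))).coeff n
      = ((∑ k ∈ range (n+2), r k)^2 - ∑ k ∈ range (n+2), (r k)^2)/2 := by
  induction n with
  | zero =>
    rw [coeff_zero_eq_eval_zero]
    simp [prod_range_succ, sum_range_succ]
    ring
  | succ n ih =>
    rw [prod_range_succ, mul_add, coeff_add, coeff_mul_X, coeff_mul_C, ih,
      coeff_sub1, sum_range_succ r (n+2), sum_range_succ (fun k => r k ^ 2) (n+2)]
    ring

lemma sumlin (n : ℕ) (c : ℂ) :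
    ∑ k ∈ range n, (c - (k:ℂ)) = n*c - n*(n-1)/2 := by
  induction n with
  | zero => simp
  | succ n ih => rw [sum_range_succ, ih]; push_cast; ring

lemma sumsq (n : ℕ) (c : ℂ) :
    ∑ k ∈ range n, (c - (k:ℂ))^2 = n*c^2 - n*(n-1)*c + n*(n-1)*(2*n-1)/6 := by
  induction n with
  | zero => simp
  | succ n ih => rw [sum_range_succ, ih]; push_cast; ring

theorem stmt_4 (n d : ℕ) (hn : 2 ≤ n) (hd : 1 ≤ d) (a b : ℂ)
    (h : polyBinom (Polynomial.C a + Polynomial.C (d : ℂ) * Polynomial.X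
            + Polynomial.C (n : ℂ)) n
        + polyBinom (Polynomial.C b + Polynomial.C (d : ℂ) * Polynomial.X
            + Polynomial.C (n : ℂ)) n
        = Polynomial.C (2 * (d : ℂ) ^ n) * polyBinom (Polynomial.X + Polynomial.C (n : ℂ)) n) :
    a + b = ((n : ℂ) + 1) * ((d : ℂ) - 1) ∧
      a * b = ((n : ℂ) + 1) * ((d : ℂ) - 1) * ((3 * (n : ℂ) + 4) * (d : ℂ) - (3 * (n : ℂ) + 2)) / 12 := by
  obtain ⟨m, rfl⟩ : ∃ m, n = m + 2 := ⟨n - 2, by omega⟩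
  have hd0 : (d:ℂ) ≠ 0 := Nat.cast_ne_zero.mpr (by omega)
  set N : ℂ := ((m + 2 : ℕ) : ℂ) with hN
  have factor : ∀ c : ℂ,
      ∏ k ∈ range (m+2), (C c + C (d:ℂ) * X + C N - C (k:ℂ))
        = C ((d:ℂ)^(m+2)) * ∏ k ∈ range (m+2), (X + C ((c + N - (k:ℂ))/d)) := by
    intro c
    calc ∏ k ∈ range (m+2), (C c + C (d:ℂ) * X + C N - C (k:ℂ))
        = ∏ k ∈ range (m+2), (C (d:ℂ) * (X + C ((c + N - (k:ℂ))/d))) := by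
          refine prod_congr rfl fun k _ => ?_
          have hc : (d:ℂ) * ((c + N - (k:ℂ))/d) = c + N - (k:ℂ) := by field_simp
          rw [mul_add, ← C_mul, hc]
          simp only [C_add, C_sub]
          ring
      _ = _ := by
          rw [prod_mul_distrib, prod_const, card_range, ← C_pow]
  have factor0 : ∏ k ∈ range (m+2), (X + C N - C (k:ℂ))
      = ∏ k ∈ range (m+2), (X + C (N - (k:ℂ))) :=
    prod_congr rfl fun k _ => by rw [C_sub]; ring
  unfold polyBinom at h
  rw [factor a, factor b, factor0] at h
  have hc0 : (C (((m+2).factorial : ℂ)⁻¹ * (d:ℂ)^(m+2)) : Polynomial ℂ) ≠ 0 := by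
    rw [Ne, C_eq_zero]
    exact mul_ne_zero (inv_ne_zero (Nat.cast_ne_zero.mpr (Nat.factorial_ne_zero _)))
      (pow_ne_zero _ hd0)
  have key : (∏ k ∈ range (m+2), (X + C ((a + N - (k:ℂ))/d)))
      + (∏ k ∈ range (m+2), (X + C ((b + N - (k:ℂ))/d)))
      = C 2 * ∏ k ∈ range (m+2), (X + C (N - (k:ℂ))) := by
    apply mul_left_cancel₀ hc0
    simp only [C_mul] at h ⊢
    linear_combination h
  have c1A : (∏ k ∈ range (m+2), (X + C ((a + N - (k:ℂ))/d))).coeff (m+1)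
      = ∑ k ∈ range (m+2), (a + N - (k:ℂ))/d := coeff_sub1 _ (m+1)
  have c1B : (∏ k ∈ range (m+2), (X + C ((b + N - (k:ℂ))/d))).coeff (m+1)
      = ∑ k ∈ range (m+2), (b + N - (k:ℂ))/d := coeff_sub1 _ (m+1)
  have c10 : (∏ k ∈ range (m+2), (X + C (N - (k:ℂ)))).coeff (m+1)
      = ∑ k ∈ range (m+2), (N - (k:ℂ)) := coeff_sub1 _ (m+1)
  have c2A : (∏ k ∈ range (m+2), (X + C ((a + N - (k:ℂ))/d))).coeff m
      = ((∑ k ∈ range (m+2), (a + N - (k:ℂ))/d)^2 - ∑ k ∈ range (m+2), ((a + N - (k:ℂ))/d)^2)/2 := coeff_sub2 _ m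
  have c2B : (∏ k ∈ range (m+2), (X + C ((b + N - (k:ℂ))/d))).coeff m
      = ((∑ k ∈ range (m+2), (b + N - (k:ℂ))/d)^2 - ∑ k ∈ range (m+2), ((b + N - (k:ℂ))/d)^2)/2 := coeff_sub2 _ m
  have c20 : (∏ k ∈ range (m+2), (X + C (N - (k:ℂ)))).coeff m
      = ((∑ k ∈ range (m+2), (N - (k:ℂ)))^2 - ∑ k ∈ range (m+2), (N - (k:ℂ))^2)/2 := coeff_sub2 _ m
  have E1 := congrArg (fun p : Polynomial ℂ => p.coeff (m+1)) key
  have E2 := congrArg (fun p : Polynomial ℂ => p.coeff m) key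
  simp only [coeff_add, coeff_C_mul] at E1 E2
  rw [c1A, c1B, c10] at E1
  rw [c2A, c2B, c20] at E2
  simp only [div_pow, ← Finset.sum_div, sumlin, sumsq] at E1 E2
  simp only [hN] at E1 E2 ⊢
  push_cast at E1 E2 ⊢
  have E2b := congrArg (fun x : ℂ => x * (12 * (d:ℂ)^2)) E2
  field_simp at E1 E2b
  ring_nf at E1 E2b
  have h2 : ((m:ℂ)+2) ≠ 0 := by
    have : ((m+2:ℕ):ℂ) ≠ 0 := Nat.cast_ne_zero.mpr (by omega)
    push_cast at this; exact this
  have h1 : ((m:ℂ)+1) ≠ 0 := by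
    have : ((m+1:ℕ):ℂ) ≠ 0 := Nat.cast_ne_zero.mpr (by omega)
    push_cast at this; exact this
  have hab : a + b = ((m:ℂ)+3)*((d:ℂ)-1) := by
    apply mul_left_cancel₀ (mul_ne_zero (two_ne_zero) h2)
    linear_combination E1
  refine ⟨by linear_combination hab, ?_⟩
  apply mul_left_cancel₀ (mul_ne_zero (mul_ne_zero (mul_ne_zero
    (show (13824:ℂ) ≠ 0 by norm_num) h2) h1) (pow_ne_zero 4 hd0))
  obtain rfl : b = ((m:ℂ)+3)*((d:ℂ)-1) - a := by linear_combination hab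
  linear_combination (-288*(d:ℂ)^4) * E2b
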